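/- arXiv:1411.3597 — 3 statements merged into one kernel-verified Lean document; each statement's English description precedes it below -/
import Mathlib

section
/- With a uniform scalar quantizer Q of cell width Δ and dither Z ~ Uniform[-Δ/2, Δ/2] independent of X, the random variable N := Q(X+Z) - Z - X is uniformly distributed on [-Δ/2, Δ/2] and is independent of X. -/
open MeasureTheory ProbabilityTheory

/-- Uniform scalar quantizer with cell width `Δ`: maps `x` to the nearest point of `Δ·ℤ`. -/
noncomputable def uniformQuantizer (Δ x : ℝ) : ℝ := Δ * ((⌊x / Δ + 1 / 2⌋ : ℤ) : ℝ)

/-- The uniform probability measure on `[a, b]`. -/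
noncomputable def uniformMeasure (a b : ℝ) : Measure ℝ :=
  (ENNReal.ofReal (b - a))⁻¹ • (volume.restrict (Set.Icc a b))

open Set

lemma uq_noise_measurable (Δ : ℝ) :
    Measurable (fun p : ℝ × ℝ => uniformQuantizer Δ (p.1 + p.2) - p.2 - p.1) := by
  unfold uniformQuantizer
  have h1 : Measurable fun p : ℝ × ℝ => (p.1 + p.2) / Δ + 1 / 2 := by fun_prop
  exact ((measurable_const.mul (measurable_from_top.comp h1.floor)).sub
    measurable_snd).sub measurable_fst

lemma uq_noise_measurable' {Ω : Type*} [MeasurableSpace Ω] (Δ : ℝ) {X Z : Ω → ℝ}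
    (hX : Measurable X) (hZ : Measurable Z) :
    Measurable fun ω => uniformQuantizer Δ (X ω + Z ω) - Z ω - X ω := by
  unfold uniformQuantizer
  have h1 : Measurable fun ω => (X ω + Z ω) / Δ + 1 / 2 := by fun_prop
  exact ((measurable_const.mul (measurable_from_top.comp h1.floor)).sub hZ).sub hX

lemma toIocMod_eq_noise {Δ : ℝ} (hΔ : 0 < Δ) (y : ℝ) :
    toIocMod hΔ (-(Δ / 2)) (-y) = uniformQuantizer Δ y - y := by
  rw [toIocMod_eq_iff hΔ]
  have h1 := Int.floor_le (y / Δ + 1 / 2)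
  have h2 := Int.lt_floor_add_one (y / Δ + 1 / 2)
  have hy : Δ * (y / Δ) = y := by field_simp
  have k1 := mul_le_mul_of_nonneg_left h1 hΔ.le
  have k2 := mul_lt_mul_of_pos_left h2 hΔ
  refine ⟨⟨?_, ?_⟩, ⟨-⌊y / Δ + 1 / 2⌋, ?_⟩⟩
  · unfold uniformQuantizer; nlinarith
  · unfold uniformQuantizer; nlinarith
  · unfold uniformQuantizer; push_cast [zsmul_eq_mul]; ring

lemma uniformMeasure_isProb {a b : ℝ} (h : a < b) : IsProbabilityMeasure (uniformMeasure a b) := by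
  constructor
  unfold uniformMeasure
  rw [Measure.smul_apply, Measure.restrict_apply_univ, Real.volume_Icc, smul_eq_mul,
    ENNReal.inv_mul_cancel (by simp only [ne_eq, ENNReal.ofReal_eq_zero, not_le]; linarith)
      ENNReal.ofReal_ne_top]

lemma uniformMeasure_eq_Ioc {Δ : ℝ} :
    uniformMeasure (-(Δ / 2)) (Δ / 2)
      = (ENNReal.ofReal Δ)⁻¹ • volume.restrict (Ioc (-(Δ / 2)) (Δ / 2)) := by
  unfold uniformMeasure
  rw [← Measure.restrict_congr_set Ioc_ae_eq_Icc, show Δ / 2 - -(Δ / 2) = Δ by ring]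

lemma key_map {Δ : ℝ} (hΔ : 0 < Δ) (x : ℝ) :
    Measure.map (fun z => uniformQuantizer Δ (x + z) - z - x)
        (uniformMeasure (-(Δ / 2)) (Δ / 2)) = uniformMeasure (-(Δ / 2)) (Δ / 2) := by
  haveI : Fact (0 < Δ) := ⟨hΔ⟩
  rw [uniformMeasure_eq_Ioc, Measure.map_smul]
  congr 1
  set ν₀ := volume.restrict (Ioc (-(Δ / 2)) (Δ / 2)) with hν₀
  have hmk : MeasurePreserving ((↑) : ℝ → AddCircle Δ) ν₀ volume := by
    have := AddCircle.measurePreserving_mk Δ (-(Δ / 2))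
    rwa [show -(Δ / 2) + Δ = Δ / 2 by ring] at this
  have hrot : MeasurePreserving
      (fun u : AddCircle Δ => ((-x : ℝ) : AddCircle Δ) + -u) volume volume :=
    (measurePreserving_add_left volume _).comp (Measure.measurePreserving_neg volume)
  set L : AddCircle Δ → ℝ :=
    fun u => ((AddCircle.measurableEquivIoc Δ (-(Δ / 2)) u :
      Set.Ioc (-(Δ / 2)) (-(Δ / 2) + Δ)) : ℝ) with hL
  have hLmeas : Measurable L :=
    measurable_subtype_coe.comp (AddCircle.measurableEquivIoc Δ _).measurable
  have hLmk : ∀ y : ℝ, L ((y : ℝ) : AddCircle Δ) = toIocMod hΔ (-(Δ / 2)) y := fun y => rfl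
  have hLvol : Measure.map L volume = ν₀ := by
    rw [← hmk.map_eq, Measure.map_map hLmeas AddCircle.measurable_mk']
    have hae : (L ∘ (QuotientAddGroup.mk : ℝ → AddCircle Δ)) =ᵐ[ν₀] id := by
      rw [Filter.EventuallyEq, ae_restrict_iff' measurableSet_Ioc]
      filter_upwards with z hz
      simp only [Function.comp_apply, id]
      rw [show (QuotientAddGroup.mk z : AddCircle Δ) = ((z : ℝ) : AddCircle Δ) from rfl, hLmk]
      exact (toIocMod_eq_self hΔ).mpr (by rwa [show -(Δ / 2) + Δ = Δ / 2 by ring])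
    rw [Measure.map_congr hae, Measure.map_id]
  have hfun : (fun z : ℝ => uniformQuantizer Δ (x + z) - z - x)
      = L ∘ (fun u : AddCircle Δ => ((-x : ℝ) : AddCircle Δ) + -u) ∘ ((↑) : ℝ → AddCircle Δ) := by
    funext z
    have hcast : ((-x : ℝ) : AddCircle Δ) + -((z : ℝ) : AddCircle Δ)
        = ((-(x + z) : ℝ) : AddCircle Δ) := by
      rw [show (-(x + z) : ℝ) = -x + -z by ring]
      simp only [AddCircle.coe_add, AddCircle.coe_neg]
    show uniformQuantizer Δ (x + z) - z - x
      = L (((-x : ℝ) : AddCircle Δ) + -((z : ℝ) : AddCircle Δ))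
    rw [hcast, hLmk, toIocMod_eq_noise hΔ (x + z)]
    ring
  rw [hfun, ← Measure.map_map hLmeas (hrot.measurable.comp AddCircle.measurable_mk'),
    ← Measure.map_map hrot.measurable AddCircle.measurable_mk', hmk.map_eq, hrot.map_eq, hLvol]

set_option maxHeartbeats 1000000 in
/-- With a uniform scalar quantizer `Q` of cell width `Δ` and dither `Z ~ Uniform[-Δ/2, Δ/2]`
independent of `X`, the quantization noise `N = Q(X+Z) - Z - X` is uniformly distributed on
`[-Δ/2, Δ/2]` and independent of `X`. -/
theorem dithered_quantization_noise_uniform_indep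
    {Ω : Type*} [MeasurableSpace Ω] (P : Measure Ω) [IsProbabilityMeasure P]
    (X Z : Ω → ℝ) (hX : Measurable X) (hZ : Measurable Z)
    (Δ : ℝ) (hΔ : 0 < Δ)
    (hlaw : Measure.map Z P = uniformMeasure (-(Δ / 2)) (Δ / 2))
    (hindep : IndepFun X Z P) :
    Measure.map (fun ω => uniformQuantizer Δ (X ω + Z ω) - Z ω - X ω) P
        = uniformMeasure (-(Δ / 2)) (Δ / 2) ∧
      IndepFun X (fun ω => uniformQuantizer Δ (X ω + Z ω) - Z ω - X ω) P := by
  haveI : IsProbabilityMeasure (uniformMeasure (-(Δ / 2)) (Δ / 2)) :=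
    uniformMeasure_isProb (by linarith)
  haveI : IsProbabilityMeasure (Measure.map X P) :=
    Measure.isProbabilityMeasure_map hX.aemeasurable
  have hgm := uq_noise_measurable Δ
  have hN : Measurable fun ω => uniformQuantizer Δ (X ω + Z ω) - Z ω - X ω :=
    uq_noise_measurable' Δ hX hZ
  have hXZ : Measurable fun ω => (X ω, Z ω) := hX.prodMk hZ
  have hXN : Measurable fun ω => (X ω, uniformQuantizer Δ (X ω + Z ω) - Z ω - X ω) :=
    hX.prodMk hN
  have hjoint : Measure.map (fun ω => (X ω, Z ω)) P
      = (Measure.map X P).prod (uniformMeasure (-(Δ / 2)) (Δ / 2)) := by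
    rw [← hlaw]
    exact (indepFun_iff_map_prod_eq_prod_map_map hX.aemeasurable hZ.aemeasurable).mp hindep
  have hskew : MeasurePreserving
      (fun p : ℝ × ℝ => (p.1, uniformQuantizer Δ (p.1 + p.2) - p.2 - p.1))
      ((Measure.map X P).prod (uniformMeasure (-(Δ / 2)) (Δ / 2)))
      ((Measure.map X P).prod (uniformMeasure (-(Δ / 2)) (Δ / 2))) := by
    have hgm' : Measurable
        (Function.uncurry fun x z : ℝ => uniformQuantizer Δ (x + z) - z - x) := hgm
    exact (MeasurePreserving.id _).skew_product
      (g := fun x z : ℝ => uniformQuantizer Δ (x + z) - z - x) hgm'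
      (Filter.Eventually.of_forall fun x => key_map hΔ x)
  have hfun2 : (fun p : ℝ × ℝ => (p.1, uniformQuantizer Δ (p.1 + p.2) - p.2 - p.1))
      ∘ (fun ω => (X ω, Z ω))
      = fun ω => (X ω, uniformQuantizer Δ (X ω + Z ω) - Z ω - X ω) := funext fun ω => rfl
  have hmap2 : Measure.map
        (fun ω => (X ω, uniformQuantizer Δ (X ω + Z ω) - Z ω - X ω)) P
      = (Measure.map X P).prod (uniformMeasure (-(Δ / 2)) (Δ / 2)) := by
    rw [← hfun2, ← Measure.map_map hskew.measurable hXZ, hjoint, hskew.map_eq]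
  have hfun3 : (Prod.snd : ℝ × ℝ → ℝ)
      ∘ (fun ω => (X ω, uniformQuantizer Δ (X ω + Z ω) - Z ω - X ω))
      = fun ω => uniformQuantizer Δ (X ω + Z ω) - Z ω - X ω := funext fun ω => rfl
  have hNlaw : Measure.map (fun ω => uniformQuantizer Δ (X ω + Z ω) - Z ω - X ω) P
      = uniformMeasure (-(Δ / 2)) (Δ / 2) := by
    rw [← hfun3, ← Measure.map_map measurable_snd hXN, hmap2]
    exact Measure.snd_prod
  refine ⟨hNlaw, ?_⟩
  rw [indepFun_iff_map_prod_eq_prod_map_map hX.aemeasurable hN.aemeasurable, hmap2, hNlaw]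
end

section
/- Let Y be a discrete random variable taking values in the lattice Δℤ, obtained as Y = Q(X + Z) where Z ~ Uniform[-Δ/2, Δ/2] is independent of X, and let Q be side information independent of Z. Then the conditional entropy of Y given (X̂ = q, Z averaged out) equals the mutual information: H(Y | X̂ = q, Z) = h(X + Z | X̂ = q) − log Δ = I(X; X + Z | X̂ = q). -/
open MeasureTheory Real

/-- The key identity in Section 3 (conditionally on the reconstruction value `X̂ = q`):
let `f` be the (conditional) density of `X`, `Z ~ Uniform[-Δ/2, Δ/2]` independent of `X`,
`Y = Q(X + Z)` the dithered uniform quantizer output, and `g = f ∗ f_Z` the density of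
`U = X + Z`, so that `P(Y = jΔ | Z = z) = Δ·g(jΔ − z)`. Then the conditional entropy of `Y`
given `Z` (averaged over the dither) equals `h(X + Z) − log Δ`, which equals the mutual
information `I(X; X + Z) = h(X + Z) − h(Z)` since `h(Z) = log Δ`. -/
theorem dithered_entropy_eq_mutual_information
    (Δ : ℝ) (hΔ : 0 < Δ) (f : ℝ → ℝ) (hf : Measurable f) (hf0 : ∀ x, 0 ≤ f x)
    (hf1 : ∫ x, f x = 1)
    (g : ℝ → ℝ)
    (hg : g = fun u => (1 / Δ) * ∫ x in Set.Icc (u - Δ / 2) (u + Δ / 2), f x)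
    (hint : Integrable (fun u => g u * log (g u))) :
    ((1 / Δ) * ∫ z in Set.Icc (-(Δ / 2)) (Δ / 2),
        (-∑' j : ℤ, (Δ * g ((j : ℝ) * Δ - z)) * log (Δ * g ((j : ℝ) * Δ - z)))
      = (-∫ u, g u * log (g u)) - log Δ) ∧
    ((-∫ u, g u * log (g u)) - log Δ
      = (-∫ u, g u * log (g u))
        - (-∫ z in Set.Icc (-(Δ / 2)) (Δ / 2), (1 / Δ) * log (1 / Δ))) := by
  have hΔ' : Δ ≠ 0 := ne_of_gt hΔ
  -- f is integrable
  have hfi : Integrable f := by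
    by_contra h
    rw [integral_undef h] at hf1
    norm_num at hf1
  -- g is continuous
  have hgc : Continuous g := by
    have hII : ∀ a b : ℝ, IntervalIntegrable f volume a b := fun a b =>
      hfi.intervalIntegrable
    have hF : Continuous fun t : ℝ => ∫ x in (0:ℝ)..t, f x :=
      intervalIntegral.continuous_primitive hII 0
    have : g = fun u => (1 / Δ) *
        ((∫ x in (0:ℝ)..(u + Δ/2), f x) - ∫ x in (0:ℝ)..(u - Δ/2), f x) := by
      funext u
      simp only [hg]
      congr 1
      rw [integral_Icc_eq_integral_Ioc,
        ← intervalIntegral.integral_of_le (by linarith : u - Δ/2 ≤ u + Δ/2),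
        intervalIntegral.integral_interval_sub_left (hII 0 _) (hII 0 _)]
    rw [this]
    exact continuous_const.mul ((hF.comp (by continuity)).sub (hF.comp (by continuity)))
  have hg0 : ∀ u, 0 ≤ g u := by
    intro u
    rw [hg]
    exact mul_nonneg (by positivity) (setIntegral_nonneg measurableSet_Icc fun x _ => hf0 x)
  -- the kernel
  set F : ℝ → ℝ → ENNReal := fun u x =>
    if u - Δ/2 ≤ x ∧ x ≤ u + Δ/2 then ENNReal.ofReal (f x) else 0 with hFdef
  have hFmeas : Measurable (Function.uncurry F) := by
    apply Measurable.ite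
    · exact (measurableSet_le (measurable_fst.sub measurable_const) measurable_snd).inter
        (measurableSet_le measurable_snd (measurable_fst.add measurable_const))
    · exact (hf.comp measurable_snd).ennreal_ofReal
    · exact measurable_const
  have h1 : ∀ u, (∫⁻ x in Set.Icc (u - Δ/2) (u + Δ/2), ENNReal.ofReal (f x))
      = ∫⁻ x, F u x := by
    intro u
    rw [← lintegral_indicator measurableSet_Icc]
    congr 1
    funext x
    simp [hFdef, Set.indicator_apply, Set.mem_Icc]
  have h2 : ∀ x, (∫⁻ u, F u x) = ENNReal.ofReal Δ * ENNReal.ofReal (f x) := by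
    intro x
    have he : (fun u => F u x)
        = (Set.Icc (x - Δ/2) (x + Δ/2)).indicator (fun _ => ENNReal.ofReal (f x)) := by
      funext u
      simp only [hFdef, Set.indicator_apply, Set.mem_Icc]
      apply if_congr ?_ rfl rfl
      constructor <;> (rintro ⟨a, b⟩; exact ⟨by linarith, by linarith⟩)
    rw [he, lintegral_indicator measurableSet_Icc, setLIntegral_const, Real.volume_Icc]
    rw [mul_comm]
    congr 1
    ring_nf
  -- lintegral of g is 1
  have hfL : ∫⁻ x, ENNReal.ofReal (f x) = 1 := by
    rw [← ofReal_integral_eq_lintegral_ofReal hfi (ae_of_all _ hf0), hf1, ENNReal.ofReal_one]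
  have hL : ∫⁻ u, ENNReal.ofReal (g u) = 1 := by
    have step1 : ∀ u, ENNReal.ofReal (g u)
        = ENNReal.ofReal (1/Δ) * ∫⁻ x, F u x := by
      intro u
      rw [hg, ENNReal.ofReal_mul (by positivity), ← h1]
      congr 1
      exact ofReal_integral_eq_lintegral_ofReal hfi.integrableOn (ae_of_all _ fun x => hf0 x)
    simp_rw [step1]
    rw [lintegral_const_mul' _ _ ENNReal.ofReal_ne_top]
    have hswap : (∫⁻ u, ∫⁻ x, F u x) = ∫⁻ x, ∫⁻ u, F u x :=
      lintegral_lintegral_swap hFmeas.aemeasurable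
    rw [hswap]
    simp_rw [h2]
    rw [lintegral_const_mul' _ _ ENNReal.ofReal_ne_top, hfL, mul_one,
      ← ENNReal.ofReal_mul (by positivity)]
    rw [one_div, inv_mul_cancel₀ hΔ', ENNReal.ofReal_one]
  -- integrability of g, and total mass 1
  have hgint : Integrable g := by
    refine ⟨hgc.aestronglyMeasurable, ?_⟩
    rw [hasFiniteIntegral_iff_norm]
    have : ∀ u, ENNReal.ofReal ‖g u‖ = ENNReal.ofReal (g u) := fun u => by
      rw [Real.norm_of_nonneg (hg0 u)]
    simp_rw [this, hL]
    exact ENNReal.one_lt_top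
  have hgone : ∫ u, g u = 1 := by
    rw [integral_eq_lintegral_of_nonneg_ae (ae_of_all _ hg0) hgc.aestronglyMeasurable, hL]
    simp
  -- the function ψ
  set ψ : ℝ → ℝ := fun u => (Δ * g u) * log (Δ * g u) with hψdef
  have hψeq : ψ = fun u => (Δ * log Δ) * g u + Δ * (g u * log (g u)) := by
    funext u
    rcases eq_or_lt_of_le (hg0 u) with h | h
    · simp [hψdef, ← h]
    · simp only [hψdef]
      rw [Real.log_mul hΔ' (ne_of_gt h)]
      ring
  have hψint : Integrable ψ := by
    rw [hψeq]
    exact (hgint.const_mul _).add (hint.const_mul _)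
  have hψval : ∫ u, ψ u = Δ * log Δ + Δ * ∫ u, g u * log (g u) := by
    rw [hψeq, integral_add (hgint.const_mul _) (hint.const_mul _),
      integral_const_mul, integral_const_mul, hgone, mul_one]
  -- the tiling
  set s : ℤ → Set ℝ := fun j => Set.Ioc ((j:ℝ) * Δ - Δ/2) ((j:ℝ) * Δ + Δ/2) with hsdef
  have hs_eq : ∀ j : ℤ, s j = Set.Ioc (-(Δ/2) + j • Δ) (-(Δ/2) + (j + 1) • Δ) := by
    intro j
    simp only [hsdef, zsmul_eq_mul]
    congr 1 <;> push_cast <;> ring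
  have hs_union : (⋃ j : ℤ, s j) = Set.univ := by
    simp_rw [hs_eq]
    exact iUnion_Ioc_add_zsmul hΔ (-(Δ/2))
  have hs_disj : Pairwise (Function.onFun Disjoint s) := by
    have := Set.pairwise_disjoint_Ioc_add_zsmul (-(Δ/2)) Δ
    intro i j hij
    simpa only [Function.onFun, hs_eq] using this hij
  have hs_meas : ∀ j, MeasurableSet (s j) := fun j => measurableSet_Ioc
  -- hasSum over the tiling
  have Hsum : ∀ (h : ℝ → ℝ), Integrable h →
      HasSum (fun j : ℤ => ∫ u in s j, h u) (∫ u, h u) := by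
    intro h hh
    rw [← setIntegral_univ, ← hs_union]
    exact hasSum_integral_iUnion hs_meas hs_disj hh.integrableOn
  -- change of variables per j
  have hcv : ∀ (h : ℝ → ℝ) (j : ℤ),
      (∫ z in Set.Icc (-(Δ/2)) (Δ/2), h ((j:ℝ) * Δ - z)) = ∫ u in s j, h u := by
    intro h j
    rw [integral_Icc_eq_integral_Ioc,
      ← intervalIntegral.integral_of_le (by linarith : -(Δ/2) ≤ (Δ/2)),
      intervalIntegral.integral_comp_sub_left h ((j:ℝ) * Δ), sub_neg_eq_add,
      intervalIntegral.integral_of_le (by linarith : (j:ℝ)*Δ - Δ/2 ≤ (j:ℝ)*Δ + Δ/2)]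
  -- swap tsum and integral
  have Hswap : (∫ z in Set.Icc (-(Δ/2)) (Δ/2), ∑' j : ℤ, ψ ((j:ℝ) * Δ - z))
      = ∫ u, ψ u := by
    rw [← integral_tsum_of_summable_integral_norm]
    · rw [tsum_congr fun j : ℤ => hcv ψ j]
      exact (Hsum ψ hψint).tsum_eq
    · exact fun j => (hψint.comp_sub_left _).integrableOn
    · apply Summable.congr (Hsum (fun u => ‖ψ u‖) hψint.norm).summable
      intro j
      exact (hcv (fun u => ‖ψ u‖) j).symm
  constructor
  · have : (fun z => -∑' j : ℤ, (Δ * g ((j:ℝ) * Δ - z)) * log (Δ * g ((j:ℝ) * Δ - z)))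
        = fun z => -∑' j : ℤ, ψ ((j:ℝ) * Δ - z) := rfl
    rw [this, integral_neg, Hswap, hψval]
    field_simp
    ring
  · have : (∫ z in Set.Icc (-(Δ/2)) (Δ/2), (1/Δ) * log (1/Δ)) = -log Δ := by
      rw [setIntegral_const, measureReal_def, Real.volume_Icc, smul_eq_mul]
      rw [ENNReal.toReal_ofReal (by linarith)]
      rw [Real.log_div one_ne_zero hΔ', Real.log_one]
      field_simp
      ring
    rw [this]
    ring
end

section
/- In the Slepian–Wolf setting with side information S available only to the two encoders but not to the decoder, any achievable rate pair (R̃₁, R̃₂) must satisfy R̃₁ + R̃₂ ≥ H(Y₁, Y₂). -/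
open Real

open Real Finset
set_option maxHeartbeats 1000000

section aux
variable {β : Type*} [Fintype β] (p : β → ℝ)

lemma sum_prod_fun (n : ℕ) (Q : Fin n → β → ℝ) :
    ∑ z : Fin n → β, ∏ i, Q i (z i) = ∏ i, ∑ x, Q i x := by
  classical
  rw [Finset.prod_univ_sum]
  simp [Fintype.piFinset_univ]

lemma single_coord (hp1 : ∑ x, p x = 1) (n : ℕ) (j : Fin n) (F : β → ℝ) :
    ∑ z : Fin n → β, (∏ i, p (z i)) * F (z j) = ∑ x, p x * F x := by
  classical
  have h1 : ∀ z : Fin n → β, (∏ i, p (z i)) * F (z j)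
      = ∏ i, (p (z i) * if i = j then F (z i) else 1) := by
    intro z
    rw [Finset.prod_mul_distrib, Finset.prod_ite_eq' univ j (fun i => F (z i))]
    simp
  calc ∑ z : Fin n → β, (∏ i, p (z i)) * F (z j)
      = ∑ z : Fin n → β, ∏ i, (fun i x => p x * if i = j then F x else 1) i (z i) := by
        exact Finset.sum_congr rfl (fun z _ => h1 z)
    _ = ∏ i, ∑ x, (p x * if i = j then F x else 1) :=
        sum_prod_fun n (fun i x => p x * if i = j then F x else 1)
    _ = ∏ i, (if i = j then ∑ x, p x * F x else 1) := by
        refine Finset.prod_congr rfl (fun i _ => ?_)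
        split_ifs with h <;> simp [hp1]
    _ = ∑ x, p x * F x := by
        rw [Finset.prod_ite_eq' univ j (fun _ => ∑ x, p x * F x)]; simp

lemma pair_coord (hp1 : ∑ x, p x = 1) (n : ℕ) (j k : Fin n) (hjk : j ≠ k) (F G : β → ℝ) :
    ∑ z : Fin n → β, (∏ i, p (z i)) * (F (z j) * G (z k))
      = (∑ x, p x * F x) * (∑ x, p x * G x) := by
  classical
  have h1 : ∀ z : Fin n → β, (∏ i, p (z i)) * (F (z j) * G (z k))
      = ∏ i, (p (z i) * (if i = j then F (z i) else 1) * (if i = k then G (z i) else 1)) := by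
    intro z
    rw [Finset.prod_mul_distrib, Finset.prod_mul_distrib,
      Finset.prod_ite_eq' univ j (fun i => F (z i)),
      Finset.prod_ite_eq' univ k (fun i => G (z i))]
    simp [mul_assoc]
  calc ∑ z : Fin n → β, (∏ i, p (z i)) * (F (z j) * G (z k))
      = ∑ z : Fin n → β, ∏ i,
          (fun i x => p x * (if i = j then F x else 1) * (if i = k then G x else 1)) i (z i) :=
        Finset.sum_congr rfl (fun z _ => h1 z)
    _ = ∏ i, ∑ x, (p x * (if i = j then F x else 1) * (if i = k then G x else 1)) :=
        sum_prod_fun n (fun i x => p x * (if i = j then F x else 1) * (if i = k then G x else 1))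
    _ = ∏ i, ((if i = j then ∑ x, p x * F x else 1) * (if i = k then ∑ x, p x * G x else 1)) := by
        refine Finset.prod_congr rfl (fun i _ => ?_)
        rcases eq_or_ne i j with rfl | hij
        · simp [hjk, hp1]
        · rcases eq_or_ne i k with rfl | hik
          · simp [hij, hp1]
          · simp [hij, hik, hp1]
    _ = (∑ x, p x * F x) * (∑ x, p x * G x) := by
        rw [Finset.prod_mul_distrib,
          Finset.prod_ite_eq' univ j (fun _ => ∑ x, p x * F x),
          Finset.prod_ite_eq' univ k (fun _ => ∑ x, p x * G x)]
        simp
end aux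


section cheb
variable {β : Type*} [Fintype β] (p : β → ℝ)

lemma second_moment (hp1 : ∑ x, p x = 1) (n : ℕ) (f : β → ℝ)
    (hmean : ∑ x, p x * f x = 0) :
    ∑ z : Fin n → β, (∏ i, p (z i)) * (∑ k, f (z k)) ^ 2
      = (n : ℝ) * ∑ x, p x * f x ^ 2 := by
  classical
  have expand : ∀ z : Fin n → β,
      (∏ i, p (z i)) * (∑ k, f (z k)) ^ 2
        = ∑ j : Fin n, ∑ k : Fin n, (∏ i, p (z i)) * (f (z j) * f (z k)) := by
    intro z
    rw [sq, Finset.sum_mul_sum, Finset.mul_sum]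
    refine Finset.sum_congr rfl (fun j _ => ?_)
    rw [Finset.mul_sum]
  calc ∑ z : Fin n → β, (∏ i, p (z i)) * (∑ k, f (z k)) ^ 2
      = ∑ z : Fin n → β, ∑ j : Fin n, ∑ k : Fin n,
          (∏ i, p (z i)) * (f (z j) * f (z k)) :=
        Finset.sum_congr rfl (fun z _ => expand z)
    _ = ∑ j : Fin n, ∑ k : Fin n, ∑ z : Fin n → β,
          (∏ i, p (z i)) * (f (z j) * f (z k)) := by
        rw [Finset.sum_comm]
        exact Finset.sum_congr rfl (fun j _ => Finset.sum_comm)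
    _ = ∑ j : Fin n, ∑ k : Fin n,
          (if j = k then ∑ x, p x * f x ^ 2 else 0) := by
        refine Finset.sum_congr rfl (fun j _ => Finset.sum_congr rfl (fun k _ => ?_))
        rcases eq_or_ne j k with rfl | hjk
        · simp only [if_pos rfl]
          have := single_coord p hp1 n j (fun x => f x * f x)
          simpa [sq] using this
        · rw [if_neg hjk, pair_coord p hp1 n j k hjk f f, hmean]
          ring
    _ = (n : ℝ) * ∑ x, p x * f x ^ 2 := by
        simp [Finset.sum_ite_eq, mul_comm]

lemma chebyshev_tail (hp0 : ∀ x, 0 ≤ p x) (hp1 : ∑ x, p x = 1) (n : ℕ) (f : β → ℝ)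
    (t : ℝ) (ht : 0 < t) :
    ∑ z : Fin n → β,
        (if (∑ k, f (z k)) ≤ (n : ℝ) * (∑ x, p x * f x) - t then ∏ i, p (z i) else 0)
      ≤ (n : ℝ) * (∑ x, p x * (f x - ∑ y, p y * f y) ^ 2) / t ^ 2 := by
  classical
  set μ := ∑ x, p x * f x with hμ
  set g : β → ℝ := fun x => f x - μ with hg
  have hgmean : ∑ x, p x * g x = 0 := by
    simp only [hg, mul_sub, Finset.sum_sub_distrib]
    rw [← Finset.sum_mul, hp1]
    simp [hμ]
  have key := second_moment p hp1 n g hgmean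
  have hterm : ∀ z : Fin n → β,
      (if (∑ k, f (z k)) ≤ (n : ℝ) * μ - t then ∏ i, p (z i) else 0)
        ≤ (∏ i, p (z i)) * (∑ k, g (z k)) ^ 2 / t ^ 2 := by
    intro z
    have hprod : (0:ℝ) ≤ ∏ i, p (z i) := Finset.prod_nonneg (fun i _ => hp0 _)
    have hsum : ∑ k, g (z k) = (∑ k, f (z k)) - (n : ℝ) * μ := by
      simp [hg, Finset.sum_sub_distrib, mul_comm]
    split_ifs with h
    · have h3 : t ^ 2 ≤ (∑ k, g (z k)) ^ 2 := by nlinarith [hsum]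
      rw [le_div_iff₀ (by positivity)]
      calc (∏ i, p (z i)) * t ^ 2 ≤ (∏ i, p (z i)) * (∑ k, g (z k)) ^ 2 :=
            mul_le_mul_of_nonneg_left h3 hprod
        _ = _ := rfl
    · positivity
  calc ∑ z : Fin n → β,
        (if (∑ k, f (z k)) ≤ (n : ℝ) * μ - t then ∏ i, p (z i) else 0)
      ≤ ∑ z : Fin n → β, (∏ i, p (z i)) * (∑ k, g (z k)) ^ 2 / t ^ 2 :=
        Finset.sum_le_sum (fun z _ => hterm z)
    _ = (∑ z : Fin n → β, (∏ i, p (z i)) * (∑ k, g (z k)) ^ 2) / t ^ 2 := by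
        rw [Finset.sum_div]
    _ = (n : ℝ) * (∑ x, p x * g x ^ 2) / t ^ 2 := by rw [key]
    _ = _ := rfl
end cheb


/-- Lemma 1: in the Slepian–Wolf setting for a discrete memoryless pair source `(Y₁, Y₂)` with
finite alphabets, where side information `S` (jointly distributed with the source blocks, with
correct marginal) is available only to the two encoders but not to the decoder, any achievable
rate pair `(R̃₁, R̃₂)` must satisfy `R̃₁ + R̃₂ ≥ H(Y₁, Y₂)` (entropy in bits). -/
theorem sw_encoder_side_info_converse
    {𝒴₁ 𝒴₂ 𝒮 : Type*} [Fintype 𝒴₁] [Fintype 𝒴₂] [Fintype 𝒮]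
    [DecidableEq 𝒴₁] [DecidableEq 𝒴₂]
    (p : 𝒴₁ × 𝒴₂ → ℝ) (hp0 : ∀ x, 0 ≤ p x) (hp1 : ∑ x, p x = 1)
    (q : (n : ℕ) → ((Fin n → 𝒴₁) × (Fin n → 𝒴₂) × 𝒮) → ℝ)
    (hq0 : ∀ n w, 0 ≤ q n w) (hq1 : ∀ n, ∑ w, q n w = 1)
    (hmarg : ∀ n (y₁ : Fin n → 𝒴₁) (y₂ : Fin n → 𝒴₂),
      ∑ s, q n (y₁, y₂, s) = ∏ k, p (y₁ k, y₂ k))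
    (R₁ R₂ : ℝ)
    (hach : ∀ δ > (0 : ℝ), ∃ N : ℕ, ∀ n ≥ N,
      ∃ (M₁ M₂ : ℕ)
        (f₁ : (Fin n → 𝒴₁) × 𝒮 → Fin M₁) (f₂ : (Fin n → 𝒴₂) × 𝒮 → Fin M₂)
        (g : Fin M₁ × Fin M₂ → (Fin n → 𝒴₁) × (Fin n → 𝒴₂)),
        (M₁ : ℝ) ≤ 2 ^ ((n : ℝ) * (R₁ + δ)) ∧
        (M₂ : ℝ) ≤ 2 ^ ((n : ℝ) * (R₂ + δ)) ∧
        ∑ w ∈ Finset.univ.filter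
            (fun w : (Fin n → 𝒴₁) × (Fin n → 𝒴₂) × 𝒮 =>
              g (f₁ (w.1, w.2.2), f₂ (w.2.1, w.2.2)) ≠ (w.1, w.2.1)),
          q n w ≤ δ) :
    R₁ + R₂ ≥ -∑ x : 𝒴₁ × 𝒴₂, p x * logb 2 (p x) := by
  classical
  set H : ℝ := -∑ x : 𝒴₁ × 𝒴₂, p x * logb 2 (p x) with hHdef
  by_contra hcon
  push_neg at hcon
  -- hcon : R₁ + R₂ < H
  set ε : ℝ := (H - (R₁ + R₂)) / 4 with hεdef
  have hεpos : 0 < ε := by simp only [hεdef]; linarith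
  set δ : ℝ := min ε (1/4) with hδdef
  have hδpos : 0 < δ := lt_min hεpos (by norm_num)
  have hδε : δ ≤ ε := min_le_left _ _
  have hδ4 : δ ≤ 1/4 := min_le_right _ _
  obtain ⟨N, hN⟩ := hach δ hδpos
  set f : 𝒴₁ × 𝒴₂ → ℝ := fun x => -logb 2 (p x) with hfdef
  have hμ : ∑ x, p x * f x = H := by
    simp only [hfdef, hHdef, mul_neg, Finset.sum_neg_distrib]
  set V : ℝ := ∑ x, p x * (f x - ∑ y, p y * f y) ^ 2 with hVdef
  have hV0 : 0 ≤ V :=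
    Finset.sum_nonneg fun x _ => mul_nonneg (hp0 x) (sq_nonneg _)
  -- 𝒮 is nonempty
  have hSne : Nonempty 𝒮 := by
    by_contra h
    have he : IsEmpty 𝒮 := not_nonempty_iff.mp h
    have h1 := hq1 0
    rw [Finset.univ_eq_empty, Finset.sum_empty] at h1
    norm_num at h1
  have hcard : (0:ℝ) < (Fintype.card 𝒮 : ℝ) := by
    exact_mod_cast Fintype.card_pos_iff.mpr hSne
  have hlog2 : (0:ℝ) < Real.log 2 := Real.log_pos one_lt_two
  -- choose n
  obtain ⟨n, hn⟩ := exists_nat_gt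
    (max (N : ℝ) (max (4 * V / ε ^ 2) (4 * (Fintype.card 𝒮 : ℝ) / (ε * Real.log 2))))
  have hnN : N ≤ n := by
    have : (N : ℝ) < n := lt_of_le_of_lt (le_max_left _ _) hn
    exact_mod_cast this.le
  have hnV : 4 * V / ε ^ 2 < (n : ℝ) :=
    lt_of_le_of_lt (le_trans (le_max_left _ _) (le_max_right _ _)) hn
  have hnS : 4 * (Fintype.card 𝒮 : ℝ) / (ε * Real.log 2) < (n : ℝ) :=
    lt_of_le_of_lt (le_trans (le_max_right _ _) (le_max_right _ _)) hn
  have hnpos : (0:ℝ) < n := lt_of_le_of_lt (by positivity) hnS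
  have h4V : 4 * V < (n : ℝ) * ε ^ 2 := by
    rw [div_lt_iff₀ (by positivity)] at hnV
    linarith
  have h4S : 4 * (Fintype.card 𝒮 : ℝ) < (n : ℝ) * (ε * Real.log 2) := by
    rw [div_lt_iff₀ (by positivity)] at hnS
    linarith
  obtain ⟨M₁, M₂, f₁, f₂, g, hM₁, hM₂, herr⟩ := hN n hnN
  set θ : ℝ := (2:ℝ) ^ (-((n : ℝ) * (H - ε))) with hθdef
  have hθpos : 0 < θ := Real.rpow_pos_of_pos two_pos _
  set corr : (Fin n → 𝒴₁) × (Fin n → 𝒴₂) × 𝒮 → Prop :=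
    fun w => g (f₁ (w.1, w.2.2), f₂ (w.2.1, w.2.2)) = (w.1, w.2.1) with hcorrdef
  set High : (Fin n → 𝒴₁) → (Fin n → 𝒴₂) → Prop :=
    fun y₁ y₂ => θ < ∏ k, p (y₁ k, y₂ k) with hHighdef
  -- correct mass is at least 1 - δ
  rw [Finset.sum_filter] at herr
  have hcorrmass : 1 - δ ≤ ∑ w, if corr w then q n w else 0 := by
    have hsplit : ∑ w, q n w
        = (∑ w, if corr w then q n w else 0)
          + ∑ w, (if g (f₁ (w.1, w.2.2), f₂ (w.2.1, w.2.2)) ≠ (w.1, w.2.1)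
              then q n w else 0) := by
      rw [← Finset.sum_add_distrib]
      refine Finset.sum_congr rfl fun w _ => ?_
      by_cases h : corr w
      · have h' : g (f₁ (w.1, w.2.2), f₂ (w.2.1, w.2.2)) = (w.1, w.2.1) := h
        rw [if_pos h, if_neg (by exact fun hne => hne h'), add_zero]
      · have h' : ¬ g (f₁ (w.1, w.2.2), f₂ (w.2.1, w.2.2)) = (w.1, w.2.1) := h
        rw [if_neg h, if_pos h', zero_add]
    rw [hq1 n] at hsplit
    linarith
  -- split into high-probability part and decodable part
  have hsplit2 : (∑ w, if corr w then q n w else 0)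
      ≤ (∑ w, if High w.1 w.2.1 then q n w else 0)
        + ∑ w, if corr w ∧ ¬ High w.1 w.2.1 then q n w else 0 := by
    rw [← Finset.sum_add_distrib]
    refine Finset.sum_le_sum fun w _ => ?_
    split_ifs <;> first | (exfalso; tauto) | linarith [hq0 n w]
  -- Part A : high probability mass is small (Chebyshev / AEP)
  have hcheb := chebyshev_tail p hp0 hp1 n f ((n : ℝ) * ε) (by positivity)
  rw [← hVdef, hμ] at hcheb
  have hAbound : (∑ w, if High w.1 w.2.1 then q n w else 0)
      ≤ (n : ℝ) * V / ((n : ℝ) * ε) ^ 2 := by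
    have hA1 : (∑ w, if High w.1 w.2.1 then q n w else 0)
        = ∑ y₁, ∑ y₂, (if High y₁ y₂ then ∏ k, p (y₁ k, y₂ k) else 0) := by
      rw [Fintype.sum_prod_type]
      refine Finset.sum_congr rfl fun y₁ _ => ?_
      rw [Fintype.sum_prod_type]
      refine Finset.sum_congr rfl fun y₂ _ => ?_
      by_cases h : High y₁ y₂
      · rw [if_pos h, ← hmarg n y₁ y₂]
        exact Finset.sum_congr rfl fun s _ => if_pos h
      · rw [if_neg h]
        have : ∀ s : 𝒮, (if High y₁ y₂ then q n (y₁, y₂, s) else 0) = 0 :=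
          fun s => if_neg h
        simp [this]
    have hA2 : (∑ y₁, ∑ y₂, (if High y₁ y₂ then ∏ k, p (y₁ k, y₂ k) else 0))
        = ∑ z : Fin n → 𝒴₁ × 𝒴₂,
            (if θ < ∏ k, p (z k) then ∏ k, p (z k) else 0) := by
      rw [← Fintype.sum_prod_type'
          (fun y₁ y₂ => if High y₁ y₂ then ∏ k, p (y₁ k, y₂ k) else 0),
        ← Equiv.sum_comp (Equiv.arrowProdEquivProdArrow (Fin n) (fun _ => 𝒴₁) (fun _ => 𝒴₂))
          (fun y : (Fin n → 𝒴₁) × (Fin n → 𝒴₂) =>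
            if High y.1 y.2 then ∏ k, p (y.1 k, y.2 k) else 0)]
      exact Finset.sum_congr rfl fun z _ => rfl
    rw [hA1, hA2]
    refine le_trans (Finset.sum_le_sum fun z _ => ?_) hcheb
    by_cases h : θ < ∏ k, p (z k)
    · rw [if_pos h]
      have hppos : 0 < ∏ k, p (z k) := lt_trans hθpos h
      have hne : ∀ k ∈ Finset.univ, p (z k) ≠ 0 := fun k _ h0 =>
        absurd (Finset.prod_eq_zero (Finset.mem_univ k) h0) (ne_of_gt hppos)
      have hlogsum : logb 2 (∏ k, p (z k)) = ∑ k, logb 2 (p (z k)) :=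
        Real.logb_prod Finset.univ _ hne
      have hlt : -((n : ℝ) * (H - ε)) < logb 2 (∏ k, p (z k)) := by
        have h2 := Real.logb_lt_logb (b := 2) one_lt_two hθpos h
        rwa [hθdef, Real.logb_rpow two_pos (by norm_num)] at h2
      have hcond : (∑ k, f (z k)) ≤ (n : ℝ) * H - (n : ℝ) * ε := by
        have hfz : ∑ k, f (z k) = -∑ k, logb 2 (p (z k)) := by
          simp [hfdef, Finset.sum_neg_distrib]
        rw [hfz, ← hlogsum]
        nlinarith [hlt]
      rw [if_pos hcond]
    · rw [if_neg h]
      split_ifs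
      · exact Finset.prod_nonneg fun k _ => hp0 _
      · exact le_refl 0
  -- Part B : the correctly decoded, low-probability mass is small (counting)
  have hswap : ∀ (F : (Fin n → 𝒴₁) × (Fin n → 𝒴₂) × 𝒮 → ℝ),
      ∑ w, F w = ∑ s, ∑ y₁, ∑ y₂, F (y₁, y₂, s) := by
    intro F
    rw [Fintype.sum_prod_type]
    calc ∑ y₁, ∑ ws : (Fin n → 𝒴₂) × 𝒮, F (y₁, ws)
        = ∑ y₁, ∑ y₂, ∑ s, F (y₁, y₂, s) := by
          exact Finset.sum_congr rfl fun y₁ _ => Fintype.sum_prod_type _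
      _ = ∑ y₁, ∑ s, ∑ y₂, F (y₁, y₂, s) :=
          Finset.sum_congr rfl fun y₁ _ => Finset.sum_comm
      _ = ∑ s, ∑ y₁, ∑ y₂, F (y₁, y₂, s) := Finset.sum_comm
  have hBbound : (∑ w, if corr w ∧ ¬ High w.1 w.2.1 then q n w else 0)
      ≤ (Fintype.card 𝒮 : ℝ) * ((M₁ : ℝ) * (M₂ : ℝ) * θ) := by
    rw [hswap]
    have hs : ∀ s : 𝒮,
        (∑ y₁, ∑ y₂, if corr (y₁, y₂, s) ∧ ¬ High y₁ y₂ then q n (y₁, y₂, s) else 0)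
          ≤ (M₁ : ℝ) * (M₂ : ℝ) * θ := by
      intro s
      have hstep : ∀ y₁ y₂,
          (if corr (y₁, y₂, s) ∧ ¬ High y₁ y₂ then q n (y₁, y₂, s) else 0)
            ≤ (if g (f₁ (y₁, s), f₂ (y₂, s)) = (y₁, y₂) then θ else 0) := by
        intro y₁ y₂
        by_cases h : corr (y₁, y₂, s) ∧ ¬ High y₁ y₂
        · have hfix : g (f₁ (y₁, s), f₂ (y₂, s)) = (y₁, y₂) := h.1
          rw [if_pos h, if_pos hfix]
          calc q n (y₁, y₂, s) ≤ ∑ s', q n (y₁, y₂, s') :=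
                Finset.single_le_sum (f := fun s' => q n (y₁, y₂, s'))
                  (fun s' _ => hq0 n _) (Finset.mem_univ s)
            _ = ∏ k, p (y₁ k, y₂ k) := hmarg n y₁ y₂
            _ ≤ θ := not_lt.mp h.2
        · rw [if_neg h]
          split_ifs
          · exact le_of_lt hθpos
          · exact le_refl 0
      have hcardbound : ((Finset.univ.filter
          (fun y : (Fin n → 𝒴₁) × (Fin n → 𝒴₂) =>
            g (f₁ (y.1, s), f₂ (y.2, s)) = y)).card : ℝ) ≤ (M₁ : ℝ) * (M₂ : ℝ) := by
        have hinj : (Finset.univ.filter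
            (fun y : (Fin n → 𝒴₁) × (Fin n → 𝒴₂) =>
              g (f₁ (y.1, s), f₂ (y.2, s)) = y)).card
            ≤ (Finset.univ : Finset (Fin M₁ × Fin M₂)).card := by
          apply Finset.card_le_card_of_injOn
            (fun y => (f₁ (y.1, s), f₂ (y.2, s))) (fun y _ => Finset.mem_univ _)
          intro y hy y' hy' heq
          have hy1 := (Finset.mem_filter.mp hy).2
          have hy2 := (Finset.mem_filter.mp hy').2
          calc y = g (f₁ (y.1, s), f₂ (y.2, s)) := hy1.symm
            _ = g (f₁ (y'.1, s), f₂ (y'.2, s)) := congrArg g heq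
            _ = y' := hy2
        have : ((Finset.univ : Finset (Fin M₁ × Fin M₂)).card) = M₁ * M₂ := by
          simp
        rw [this] at hinj
        exact_mod_cast hinj
      calc (∑ y₁, ∑ y₂, if corr (y₁, y₂, s) ∧ ¬ High y₁ y₂ then q n (y₁, y₂, s) else 0)
          ≤ ∑ y₁, ∑ y₂, (if g (f₁ (y₁, s), f₂ (y₂, s)) = (y₁, y₂) then θ else 0) :=
            Finset.sum_le_sum fun y₁ _ => Finset.sum_le_sum fun y₂ _ => hstep y₁ y₂
        _ = ∑ y : (Fin n → 𝒴₁) × (Fin n → 𝒴₂),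
              (if g (f₁ (y.1, s), f₂ (y.2, s)) = y then θ else 0) :=
            (Fintype.sum_prod_type'
              (fun y₁ y₂ => if g (f₁ (y₁, s), f₂ (y₂, s)) = (y₁, y₂) then θ else 0)).symm
        _ = ((Finset.univ.filter
              (fun y : (Fin n → 𝒴₁) × (Fin n → 𝒴₂) =>
                g (f₁ (y.1, s), f₂ (y.2, s)) = y)).card : ℝ) * θ := by
            rw [← Finset.sum_filter, Finset.sum_const, nsmul_eq_mul]
        _ ≤ (M₁ : ℝ) * (M₂ : ℝ) * θ :=
            mul_le_mul_of_nonneg_right hcardbound (le_of_lt hθpos)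
    calc (∑ s, ∑ y₁, ∑ y₂,
            if corr (y₁, y₂, s) ∧ ¬ High (y₁, y₂, s).1 (y₁, y₂, s).2.1
              then q n (y₁, y₂, s) else 0)
        ≤ ∑ _s : 𝒮, (M₁ : ℝ) * (M₂ : ℝ) * θ := Finset.sum_le_sum fun s _ => hs s
      _ = (Fintype.card 𝒮 : ℝ) * ((M₁ : ℝ) * (M₂ : ℝ) * θ) := by
          rw [Finset.sum_const, nsmul_eq_mul, Finset.card_univ]
  -- numeric bound for Part A
  have hb1 : (n : ℝ) * V / ((n : ℝ) * ε) ^ 2 ≤ 1 / 4 := by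
    rw [div_le_iff₀ (by positivity)]
    nlinarith [mul_lt_mul_of_pos_left h4V hnpos]
  -- numeric bound for Part B
  have hpow : (M₁ : ℝ) * (M₂ : ℝ) * θ ≤ (2 : ℝ) ^ (-((n : ℝ) * ε)) := by
    have h1 : (M₁ : ℝ) * (M₂ : ℝ)
        ≤ 2 ^ ((n : ℝ) * (R₁ + δ)) * 2 ^ ((n : ℝ) * (R₂ + δ)) :=
      mul_le_mul hM₁ hM₂ (Nat.cast_nonneg _) (Real.rpow_nonneg (by norm_num) _)
    have h2 : (M₁ : ℝ) * (M₂ : ℝ) * θ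
        ≤ 2 ^ ((n : ℝ) * (R₁ + δ)) * 2 ^ ((n : ℝ) * (R₂ + δ)) * θ :=
      mul_le_mul_of_nonneg_right h1 hθpos.le
    have h3 : (2:ℝ) ^ ((n : ℝ) * (R₁ + δ)) * 2 ^ ((n : ℝ) * (R₂ + δ)) * θ
        = 2 ^ ((n : ℝ) * (R₁ + δ) + (n : ℝ) * (R₂ + δ) + -((n : ℝ) * (H - ε))) := by
      rw [hθdef, Real.rpow_add two_pos, Real.rpow_add two_pos]
    have hR : R₁ + R₂ = H - 4 * ε := by rw [hεdef]; ring
    have h4 : (n : ℝ) * (R₁ + δ) + (n : ℝ) * (R₂ + δ) + -((n : ℝ) * (H - ε))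
        ≤ -((n : ℝ) * ε) := by
      have heq : (n : ℝ) * (R₁ + δ) + (n : ℝ) * (R₂ + δ) + -((n : ℝ) * (H - ε))
          = (n : ℝ) * (2 * δ - 3 * ε) + (n : ℝ) * ((R₁ + R₂) - (H - 4 * ε)) := by
        ring
      rw [heq, hR, sub_self, mul_zero, add_zero]
      nlinarith [mul_le_mul_of_nonneg_left hδε (le_of_lt hnpos)]
    calc (M₁ : ℝ) * (M₂ : ℝ) * θ
        ≤ 2 ^ ((n : ℝ) * (R₁ + δ) + (n : ℝ) * (R₂ + δ) + -((n : ℝ) * (H - ε))) := by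
          rw [← h3]; exact h2
      _ ≤ (2 : ℝ) ^ (-((n : ℝ) * ε)) :=
          Real.rpow_le_rpow_of_exponent_le one_le_two h4
  have hb2 : (Fintype.card 𝒮 : ℝ) * ((M₁ : ℝ) * (M₂ : ℝ) * θ) ≤ 1 / 4 := by
    have hexp : ((n : ℝ) * ε) * Real.log 2 ≤ (2 : ℝ) ^ ((n : ℝ) * ε) := by
      rw [Real.rpow_def_of_pos two_pos]
      have h := Real.add_one_le_exp (Real.log 2 * ((n : ℝ) * ε))
      linarith [h]
    have hpos2 : (0 : ℝ) < (n : ℝ) * ε * Real.log 2 := by positivity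
    have hneg : (2 : ℝ) ^ (-((n : ℝ) * ε)) ≤ 1 / ((n : ℝ) * ε * Real.log 2) := by
      rw [Real.rpow_neg (by norm_num : (0:ℝ) ≤ 2), one_div]
      exact inv_anti₀ hpos2 (by linarith [hexp])
    calc (Fintype.card 𝒮 : ℝ) * ((M₁ : ℝ) * (M₂ : ℝ) * θ)
        ≤ (Fintype.card 𝒮 : ℝ) * (2 : ℝ) ^ (-((n : ℝ) * ε)) :=
          mul_le_mul_of_nonneg_left hpow hcard.le
      _ ≤ (Fintype.card 𝒮 : ℝ) * (1 / ((n : ℝ) * ε * Real.log 2)) :=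
          mul_le_mul_of_nonneg_left hneg hcard.le
      _ ≤ 1 / 4 := by
          rw [mul_one_div, div_le_iff₀ hpos2]
          nlinarith [h4S]
  linarith [hcorrmass, hsplit2, hAbound, hBbound, hb1, hb2, hδ4]
end
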